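/- Let (X, 𝒰) be a uniform space and f : (X, 𝒰) → (X, 𝒰) a uniformly/topologically continuous function. Then the Zadeh extension f̂ : (ℱ(X), 𝒰_∞) → (ℱ(X), 𝒰_∞) is continuous, where 𝒰_∞ is the level-wise uniformity. -/

import Mathlib

open Set Filter Topology
open scoped Uniformity

/-- The α-cut of a fuzzy set: `{x | α ≤ u x}` for `α ≠ 0`, and the support
(closure of `{x | 0 < u x}`) for `α = 0`. -/
noncomputable def fuzzyCut {X : Type*} [TopologicalSpace X] (u : X → ℝ) (α : ℝ) : Set X :=
  if α = 0 then closure {x | 0 < u x} else {x | α ≤ u x}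

/-- `u` belongs to `ℱ(X)`: a normal upper semicontinuous `[0,1]`-valued fuzzy set
with compact support. -/
structure IsFuzzySet {X : Type*} [TopologicalSpace X] (u : X → ℝ) : Prop where
  mem_Icc : ∀ x, u x ∈ Set.Icc (0:ℝ) 1
  usc : UpperSemicontinuous u
  normal : ∃ x, u x = 1
  compact_supp : IsCompact (closure {x | 0 < u x})

/-- The Zadeh extension of `f`: `x ↦ sup {u z : f z = x}` (and `0` when the
preimage is empty, since `sSup ∅ = 0` in `ℝ`). -/
noncomputable def zadeh {X : Type*} (f : X → X) (u : X → ℝ) : X → ℝ :=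
  fun x => sSup (u '' (f ⁻¹' {x}))

/-- `W(A) = ⋃ a ∈ A, W(a)` where `W(a) = {y | (a, y) ∈ W}`. -/
def ballImage {Y : Type*} (W : Set (Y × Y)) (A : Set Y) : Set Y :=
  {y | ∃ a ∈ A, (a, y) ∈ W}

/-- The Hausdorff entourage relation `𝒦[W]`: `(A,B) ∈ 𝒦[W]` iff `A ⊆ W(B)` and `B ⊆ W(A)`. -/
def KRel {Y : Type*} (W : Set (Y × Y)) (A B : Set Y) : Prop :=
  A ⊆ ballImage W B ∧ B ⊆ ballImage W A

/-- The level-wise entourage relation `ℱ[W]`: `(u_α, v_α) ∈ 𝒦[W]` for all `α ∈ [0,1]`. -/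
def FRel {X : Type*} [TopologicalSpace X] (W : Set (X × X)) (u v : X → ℝ) : Prop :=
  ∀ α ∈ Set.Icc (0:ℝ) 1, KRel W (fuzzyCut u α) (fuzzyCut v α)

/-- The Skorokhod entourage relation `G[W, ε]`: there is an increasing homeomorphism `t`
of `[0,1]` with `‖t‖ < ε` and `(u_α, v_{t α}) ∈ 𝒦[W]` for all `α ∈ [0,1]`. -/
def SkoRel {X : Type*} [TopologicalSpace X] (W : Set (X × X)) (ε : ℝ) (u v : X → ℝ) : Prop :=
  ∃ t : ℝ → ℝ, StrictMonoOn t (Set.Icc 0 1) ∧ t 0 = 0 ∧ t 1 = 1 ∧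
    Set.MapsTo t (Set.Icc 0 1) (Set.Icc 0 1) ∧ Set.SurjOn t (Set.Icc 0 1) (Set.Icc 0 1) ∧
    (∀ α ∈ Set.Icc (0:ℝ) 1, |t α - α| < ε) ∧
    (∀ α ∈ Set.Icc (0:ℝ) 1, KRel W (fuzzyCut u α) (fuzzyCut v (t α)))

/-- The sendograph of `u`: `end(u) ∩ (u₀ × [0,1])`. -/
noncomputable def send {X : Type*} [TopologicalSpace X] (u : X → ℝ) : Set (X × ℝ) :=
  {p | p.1 ∈ fuzzyCut u 0 ∧ p.2 ∈ Set.Icc (0:ℝ) 1 ∧ p.2 ≤ u p.1}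

/-- The product entourage `U × V_ε` on `X × [0,1]`. -/
def prodEnt {X : Type*} (U : Set (X × X)) (ε : ℝ) : Set ((X × ℝ) × (X × ℝ)) :=
  {p | (p.1.1, p.2.1) ∈ U ∧ |p.1.2 - p.2.2| < ε}

/-- The sendograph entourage relation `S[U, ε]`. -/
noncomputable def SendRel {X : Type*} [TopologicalSpace X] (U : Set (X × X)) (ε : ℝ)
    (u v : X → ℝ) : Prop :=
  KRel (prodEnt U ε) (send u) (send v)

/-- `u_{α⁺} = closure (⋃ β ∈ (α, 1], u_β)`, the right limit of the level map. -/
noncomputable def cutPlus {X : Type*} [TopologicalSpace X] (u : X → ℝ) (α : ℝ) : Set X :=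
  closure (⋃ β ∈ Set.Ioc α 1, fuzzyCut u β)

/-- `B` belongs to the Vietoris basic open set `⟨V 0, …, V (k-1)⟩`. -/
def inVietoris {Y : Type*} (B : Set Y) (k : ℕ) (V : Fin k → Set Y) : Prop :=
  B ⊆ (⋃ i, V i) ∧ ∀ i, (B ∩ V i).Nonempty

-- auxiliary lemmas

lemma bddAbove_image_of_fuzzy {X : Type*} [TopologicalSpace X] {u : X → ℝ}
    (hu : IsFuzzySet u) (s : Set X) : BddAbove (u '' s) := by
  refine ⟨1, ?_⟩
  rintro r ⟨z, _, rfl⟩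
  exact (hu.mem_Icc z).2

lemma fuzzyCut_zero {X : Type*} [TopologicalSpace X] (u : X → ℝ) :
    fuzzyCut u 0 = closure {x | 0 < u x} := if_pos rfl

lemma fuzzyCut_ne {X : Type*} [TopologicalSpace X] (u : X → ℝ) {α : ℝ} (h : α ≠ 0) :
    fuzzyCut u α = {x | α ≤ u x} := if_neg h

lemma cut_subset_supp {X : Type*} [TopologicalSpace X] (u : X → ℝ) {α : ℝ} (hα : 0 ≤ α) :
    fuzzyCut u α ⊆ closure {x | 0 < u x} := by
  rcases eq_or_lt_of_le hα with rfl | hpos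
  · rw [fuzzyCut_zero]
  · rw [fuzzyCut_ne u hpos.ne']
    exact fun x hx => subset_closure (lt_of_lt_of_le hpos hx)

lemma closure_subset_ballImage {X : Type*} [UniformSpace X] (S : Set X)
    {W : Set (X × X)} (hW : W ∈ 𝓤 X) : closure S ⊆ ballImage W S := by
  intro x hx
  obtain ⟨W', hW', hsymm, hWW⟩ := comp_symm_mem_uniformity_sets hW
  obtain ⟨s, hs1, hs2⟩ := mem_closure_iff_nhds.1 hx _ (UniformSpace.ball_mem_nhds x hW')
  exact ⟨s, hs2, hWW (SetRel.prodMk_mem_comp (hsymm.symm _ _ hs1) (refl_mem_uniformity hW'))⟩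

lemma image_cut_subset {X : Type*} [UniformSpace X] {f : X → X} (hf : Continuous f)
    {u : X → ℝ} (hu : IsFuzzySet u) (α : ℝ) :
    f '' fuzzyCut u α ⊆ fuzzyCut (zadeh f u) α := by
  by_cases h : α = 0
  · subst h
    rw [fuzzyCut_zero, fuzzyCut_zero]
    refine (image_closure_subset_closure_image hf).trans (closure_mono ?_)
    rintro x ⟨z, hz, rfl⟩
    have : u z ≤ zadeh f u (f z) :=
      le_csSup (bddAbove_image_of_fuzzy hu _)
        (Set.mem_image_of_mem u (show z ∈ f ⁻¹' {f z} from rfl))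
    exact lt_of_lt_of_le hz this
  · rw [fuzzyCut_ne u h, fuzzyCut_ne _ h]
    rintro x ⟨z, hz, rfl⟩
    show α ≤ zadeh f u (f z)
    exact le_trans hz (le_csSup (bddAbove_image_of_fuzzy hu _)
      (Set.mem_image_of_mem u (show z ∈ f ⁻¹' {f z} from rfl)))

lemma cut_zadeh_subset {X : Type*} [UniformSpace X] {f : X → X} (hf : Continuous f)
    {u : X → ℝ} (hu : IsFuzzySet u) (α : ℝ) (hα : 0 ≤ α)
    {W : Set (X × X)} (hW : W ∈ 𝓤 X) :
    fuzzyCut (zadeh f u) α ⊆ ballImage W (f '' fuzzyCut u α) := by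
  rcases eq_or_lt_of_le hα with rfl | hαpos
  · -- α = 0
    have hXne : Nonempty X := ⟨hu.normal.choose⟩
    have h1 : {x | 0 < zadeh f u x} ⊆ f '' fuzzyCut u 0 := by
      intro x hx
      have hne : (u '' (f ⁻¹' {x})).Nonempty := by
        by_contra hne
        rw [not_nonempty_iff_eq_empty] at hne
        simp only [mem_setOf_eq, zadeh, hne, Real.sSup_empty, lt_irrefl] at hx
      obtain ⟨r, ⟨z, hz, rfl⟩, hr⟩ := exists_lt_of_lt_csSup hne hx
      exact ⟨z, by rw [fuzzyCut_zero]; exact subset_closure hr, hz⟩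
    have : fuzzyCut (zadeh f u) 0 ⊆ closure (f '' fuzzyCut u 0) := by
      rw [fuzzyCut_zero]
      exact closure_mono h1
    exact this.trans (closure_subset_ballImage _ hW)
  · -- α > 0
    intro x hx
    have hx' : α ≤ sSup (u '' (f ⁻¹' {x})) := by
      rw [fuzzyCut_ne _ hαpos.ne'] at hx; exact hx
    have hXne : Nonempty X := ⟨x⟩
    have hne : (u '' (f ⁻¹' {x})).Nonempty := by
      by_contra hne
      rw [not_nonempty_iff_eq_empty] at hne
      rw [hne, Real.sSup_empty] at hx'
      exact absurd hx' (not_le.2 hαpos)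
    -- the family of sets
    set A : ℝ → Set X := fun β => {z | f z = x ∧ β < u z} with hA
    have hAne : ∀ β ∈ Ico (0:ℝ) α, (A β).Nonempty := by
      intro β hβ
      obtain ⟨r, ⟨z, hz, rfl⟩, hr⟩ := exists_lt_of_lt_csSup hne (lt_of_lt_of_le hβ.2 hx')
      exact ⟨z, hz, hr⟩
    have h0 : (0:ℝ) ∈ Ico (0:ℝ) α := ⟨le_refl 0, hαpos⟩
    set F : Filter X := ⨅ β : Ico (0:ℝ) α, 𝓟 (A β) with hF
    have hdir : Directed (· ≥ ·) fun β : Ico (0:ℝ) α => 𝓟 (A β) := by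
      rintro ⟨β, hβ⟩ ⟨γ, hγ⟩
      refine ⟨⟨max β γ, ⟨le_max_of_le_left hβ.1, max_lt hβ.2 hγ.2⟩⟩, ?_, ?_⟩ <;>
        exact principal_mono.2 (fun z hz => ⟨hz.1, lt_of_le_of_lt (by simp) hz.2⟩)
    have hFne : F.NeBot := by
      rw [hF, iInf_neBot_iff_of_directed hdir]
      exact fun β => principal_neBot_iff.2 (hAne β β.2)
    have hmemF : ∀ β ∈ Ico (0:ℝ) α, A β ∈ F :=
      fun β hβ => mem_iInf_of_mem ⟨β, hβ⟩ (mem_principal_self _)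
    have hFK : F ≤ 𝓟 (closure {x | 0 < u x}) := by
      refine le_principal_iff.2 (mem_of_superset (hmemF 0 h0) ?_)
      exact fun z hz => subset_closure hz.2
    obtain ⟨z, hzK, hz⟩ := hu.compact_supp.exists_clusterPt hFK
    have hG : (𝓝 z ⊓ F).NeBot := hz
    -- u z ≥ α
    have huz : α ≤ u z := by
      by_contra hc
      push_neg at hc
      set y := (u z + α) / 2 with hy
      have hy1 : u z < y := by rw [hy]; linarith
      have hy2 : y < α := by rw [hy]; linarith
      have hy0 : 0 ≤ y := le_of_lt (lt_of_le_of_lt (hu.mem_Icc z).1 hy1)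
      have hnb : {w | u w < y} ∈ 𝓝 z := hu.usc z y hy1
      have h1 : {w | u w < y} ∈ 𝓝 z ⊓ F := mem_inf_of_left hnb
      have h2 : A y ∈ 𝓝 z ⊓ F := mem_inf_of_right (hmemF y ⟨hy0, hy2⟩)
      obtain ⟨w, hw1, hw2⟩ := Filter.nonempty_of_mem (inter_mem h1 h2)
      exact absurd hw2.2 (not_lt.2 hw1.le)
    -- (f z, x) ∈ W
    have hfz : (f z, x) ∈ W := by
      have hnb : f ⁻¹' (UniformSpace.ball (f z) W) ∈ 𝓝 z :=
        hf.continuousAt.preimage_mem_nhds (UniformSpace.ball_mem_nhds _ hW)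
      have h1 : f ⁻¹' (UniformSpace.ball (f z) W) ∈ 𝓝 z ⊓ F := mem_inf_of_left hnb
      have h2 : A 0 ∈ 𝓝 z ⊓ F := mem_inf_of_right (hmemF 0 h0)
      obtain ⟨w, hw1, hw2⟩ := Filter.nonempty_of_mem (inter_mem h1 h2)
      rw [← hw2.1]
      exact hw1
    exact ⟨f z, ⟨z, by rw [fuzzyCut_ne u hαpos.ne']; exact huz, rfl⟩, hfz⟩

/-- Continuity of the Zadeh extension with respect to the level-wise uniformity `𝒰_∞`:
for each `u ∈ ℱ(X)` and each entourage `U`, there is an entourage `V` such that the basic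
`𝒰_∞`-ball `ℱ[V](u)` is mapped into `ℱ[U](f̂ u)`. -/
theorem stmt9 {X : Type*} [UniformSpace X] {f : X → X} (hf : Continuous f) :
    ∀ u : X → ℝ, IsFuzzySet u → ∀ U ∈ 𝓤 X, ∃ V ∈ 𝓤 X,
      ∀ v : X → ℝ, IsFuzzySet v → FRel V u v → FRel U (zadeh f u) (zadeh f v) := by
  intro u hu U hU
  obtain ⟨W, hW, hWsymm, hWW⟩ := comp_symm_mem_uniformity_sets hU
  set K := closure {x | 0 < u x} with hK
  have hVmem : {p : X × X | p.1 ∈ K → (f p.1, f p.2) ∈ W} ∈ 𝓤 X :=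
    hu.compact_supp.uniformContinuousAt_of_continuousAt f (fun a _ => hf.continuousAt) hW
  refine ⟨SetRel.symmetrize {p : X × X | p.1 ∈ K → (f p.1, f p.2) ∈ W},
    symmetrize_mem_uniformity hVmem, fun v hv hFR α hα => ?_⟩
  constructor
  · intro x hx
    obtain ⟨fa, ⟨a, ha, rfl⟩, hfax⟩ := cut_zadeh_subset hf hu α hα.1 hW hx
    obtain ⟨b, hb, hba⟩ := (hFR α hα).1 ha
    have haK : a ∈ K := cut_subset_supp u hα.1 ha
    have h1 : (f b, f a) ∈ W := hWsymm.symm _ _ (hba.2 haK)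
    exact ⟨f b, image_cut_subset hf hv α ⟨b, hb, rfl⟩,
      hWW (SetRel.prodMk_mem_comp h1 hfax)⟩
  · intro x hx
    obtain ⟨fb, ⟨b, hb, rfl⟩, hfbx⟩ := cut_zadeh_subset hf hv α hα.1 hW hx
    obtain ⟨a, ha, hab⟩ := (hFR α hα).2 hb
    have haK : a ∈ K := cut_subset_supp u hα.1 ha
    have h1 : (f a, f b) ∈ W := hab.1 haK
    exact ⟨f a, image_cut_subset hf hu α ⟨a, ha, rfl⟩,
      hWW (SetRel.prodMk_mem_comp h1 hfbx)⟩
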